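/- For all texts A and B of equal length N ≥ 1, d_2(A, B, 0) = d_labbe(A, B); that is, the global distance with discounting factor 0, namely (1/N) · min over permutations φ of {1,...,N} of ∑_{i=1}^N dphrase(i, φ(i), 0), equals the 1-gram distance (∑_w |F_A(w) − F_B(w)|)/(2N), where the sum ranges over all words w occurring in A or B. -/

import Mathlib

noncomputable section

/-- Extended Kronecker indicator for texts `A` (of length `NA`) and `B` (of length `NB`),
indexed 1-based: `δ_{i,j} = 0` if `i ≤ NA`, `j ≤ NB` and `a_i = b_j`, and `1` otherwise. -/
def delta {W : Type*} [DecidableEq W] (A B : ℕ → W) (NA NB : ℕ) (i j : ℕ) : ℝ :=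
  if i ≤ NA ∧ j ≤ NB ∧ A i = B j then 0 else 1

/-- The position match `dphrase(i, j, λ) = ∑_{k=0}^∞ λ^k δ_{i+k, j+k}`. -/
def dphrase {W : Type*} [DecidableEq W] (A B : ℕ → W) (NA NB : ℕ) (lam : ℝ)
    (i j : ℕ) : ℝ :=
  ∑' k : ℕ, lam ^ k * delta A B NA NB (i + k) (j + k)

/-- The absolute frequency `F_A(w)` of the word `w` in the text `A` of length `N`. -/
def freq {W : Type*} [DecidableEq W] (A : ℕ → W) (N : ℕ) (w : W) : ℕ :=
  ((Finset.Icc 1 N).filter fun i => A i = w).card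

/-- The 1-gram distance between texts `A` and `B` of equal length `N`:
`(∑_w |F_A(w) − F_B(w)|) / (2N)`, the sum ranging over all words occurring in `A` or `B`. -/
def dlabbe {W : Type*} [DecidableEq W] (A B : ℕ → W) (N : ℕ) : ℝ :=
  (∑ w ∈ (Finset.Icc 1 N).image A ∪ (Finset.Icc 1 N).image B,
      |(freq A N w : ℝ) - (freq B N w : ℝ)|) / (2 * N)

/-- The assignment distance
`d_2(A, B, λ) = (1 − λ)(1/N) · min_{φ ∈ S_N} ∑_{i=1}^N dphrase(i, φ(i), λ)`
between texts `A` and `B` of equal length `N`. -/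
def d2 {W : Type*} [DecidableEq W] (A B : ℕ → W) (N : ℕ) (lam : ℝ) : ℝ :=
  (1 - lam) * (1 / N) *
    ⨅ φ : Equiv.Perm (Fin N),
      ∑ i : Fin N, dphrase A B N N lam ((i : ℕ) + 1) ((φ i : ℕ) + 1)

namespace D2Aux

open Finset

variable {W : Type*} [DecidableEq W] {N : ℕ}

/-- The set of matched positions for a permutation. -/
def mset (f g : Fin N → W) (σ : Equiv.Perm (Fin N)) : Finset (Fin N) :=
  Finset.univ.filter fun i => f i = g (σ i)

/-- The vocabulary. -/
def voc (f g : Fin N → W) : Finset W :=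
  Finset.univ.image f ∪ Finset.univ.image g

/-- min of the two frequencies. -/
def mm (f g : Fin N → W) (w : W) : ℕ :=
  min (Finset.univ.filter fun i => f i = w).card (Finset.univ.filter fun i => g i = w).card

lemma matches_le (f g : Fin N → W) (σ : Equiv.Perm (Fin N)) :
    (mset f g σ).card ≤ ∑ w ∈ voc f g, mm f g w := by
  rw [Finset.card_eq_sum_card_fiberwise
    (f := f) (t := voc f g)
    (fun i _ => mem_union_left _ (mem_image_of_mem f (mem_univ i)))]
  refine Finset.sum_le_sum fun w _ => le_min ?_ ?_
  · exact card_le_card (filter_subset_filter _ (subset_univ _))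
  · refine Finset.card_le_card_of_injOn σ ?_ ?_
    · intro i hi
      obtain ⟨hi1, hi2⟩ := Finset.mem_filter.1 hi
      have hi3 := (Finset.mem_filter.1 hi1).2
      exact Finset.mem_filter.2 ⟨Finset.mem_univ _, by rw [← hi3, hi2]⟩
    · exact fun a _ b _ h => σ.injective h

lemma key {f g : Fin N → W} {σ : Equiv.Perm (Fin N)}
    (h : (mset f g σ).card < ∑ w ∈ voc f g, mm f g w) :
    ∃ i j : Fin N, f i ≠ g (σ i) ∧ f j ≠ g (σ j) ∧ f i = g (σ j) := by
  rw [Finset.card_eq_sum_card_fiberwise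
    (f := f) (t := voc f g)
    (fun i _ => mem_union_left _ (mem_image_of_mem f (mem_univ i)))] at h
  obtain ⟨w, hwV, hw⟩ :
      ∃ w ∈ voc f g, ((mset f g σ).filter fun i => f i = w).card < mm f g w := by
    by_contra hc
    push_neg at hc
    exact absurd (Finset.sum_le_sum hc) (not_le.2 h)
  have hwp : ((mset f g σ).filter fun i => f i = w).card
      < (Finset.univ.filter fun i => f i = w).card := lt_of_lt_of_le hw (min_le_left _ _)
  have hwq : ((mset f g σ).filter fun i => f i = w).card
      < (Finset.univ.filter fun i => g i = w).card := lt_of_lt_of_le hw (min_le_right _ _)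
  -- A side
  obtain ⟨i, hiP, hiM⟩ := Finset.not_subset.1 (fun hss => absurd (card_le_card hss) (not_le.2 hwp))
  have hfi : f i = w := (Finset.mem_filter.1 hiP).2
  have hi : f i ≠ g (σ i) := by
    intro hcon
    exact hiM (Finset.mem_filter.2 ⟨Finset.mem_filter.2 ⟨mem_univ i, hcon⟩, hfi⟩)
  -- B side
  have himg : (((mset f g σ).filter fun i => f i = w).image σ).card
      < (Finset.univ.filter fun i => g i = w).card := by
    rwa [Finset.card_image_of_injective _ σ.injective]
  obtain ⟨b, hbQ, hbT⟩ := Finset.not_subset.1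
    (fun hss => absurd (card_le_card hss) (not_le.2 himg))
  have hgb : g b = w := (Finset.mem_filter.1 hbQ).2
  refine ⟨i, σ.symm b, hi, ?_, ?_⟩
  · intro hcon
    rw [Equiv.apply_symm_apply] at hcon
    refine hbT (Finset.mem_image.2 ⟨σ.symm b, ?_, Equiv.apply_symm_apply σ b⟩)
    refine Finset.mem_filter.2 ⟨Finset.mem_filter.2 ⟨mem_univ _, ?_⟩, ?_⟩
    · rwa [Equiv.apply_symm_apply]
    · rw [hcon, hgb]
  · rw [Equiv.apply_symm_apply, hgb, hfi]

lemma improve {f g : Fin N → W} {σ : Equiv.Perm (Fin N)} {i j : Fin N}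
    (hi : f i ≠ g (σ i)) (hj : f j ≠ g (σ j)) (hij : f i = g (σ j)) :
    (mset f g σ).card + 1 ≤ (mset f g (σ * Equiv.swap i j)).card := by
  have hiM : i ∉ mset f g σ := by simp [mset, hi]
  have hsub : insert i (mset f g σ) ⊆ mset f g (σ * Equiv.swap i j) := by
    intro k hk
    rcases Finset.mem_insert.1 hk with rfl | hk
    · simp only [mset, Finset.mem_filter, Finset.mem_univ, true_and, Equiv.Perm.mul_apply,
        Equiv.swap_apply_left]
      exact Finset.mem_filter.2 ⟨Finset.mem_univ _, by rw [Equiv.swap_apply_left]; exact hij⟩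
    · have hkM : f k = g (σ k) := by
        simpa [mset] using hk
      have hki : k ≠ i := fun h => hiM (h ▸ hk)
      have hkj : k ≠ j := fun h => hj (h ▸ hkM)
      simp only [mset, Finset.mem_filter, Finset.mem_univ, true_and, Equiv.Perm.mul_apply,
        Equiv.swap_apply_of_ne_of_ne hki hkj]
      exact Finset.mem_filter.2 ⟨Finset.mem_univ _, by
        rw [Equiv.swap_apply_of_ne_of_ne hki hkj]; exact hkM⟩
  calc (mset f g σ).card + 1 = (insert i (mset f g σ)).card :=
        (Finset.card_insert_of_notMem hiM).symm
    _ ≤ _ := card_le_card hsub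

lemma exists_good (f g : Fin N → W) :
    ∃ σ : Equiv.Perm (Fin N), ∑ w ∈ voc f g, mm f g w ≤ (mset f g σ).card := by
  suffices h : ∀ t (σ : Equiv.Perm (Fin N)),
      ∑ w ∈ voc f g, mm f g w ≤ (mset f g σ).card + t →
      ∃ σ', ∑ w ∈ voc f g, mm f g w ≤ (mset f g σ').card by
    exact h (∑ w ∈ voc f g, mm f g w) 1 (Nat.le_add_left _ _)
  intro t
  induction t with
  | zero => exact fun σ h => ⟨σ, by simpa using h⟩
  | succ t ih =>
    intro σ h
    by_cases hle : ∑ w ∈ voc f g, mm f g w ≤ (mset f g σ).card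
    · exact ⟨σ, hle⟩
    · push_neg at hle
      obtain ⟨i, j, hi, hj, hij⟩ := key hle
      have himp := improve hi hj hij
      exact ih (σ * Equiv.swap i j) (by omega)

lemma sum_freq (f g : Fin N → W) :
    ∑ w ∈ voc f g, (Finset.univ.filter fun i => f i = w).card = N := by
  rw [← Finset.card_eq_sum_card_fiberwise
    (f := f) (t := voc f g)
    (fun i _ => mem_union_left _ (mem_image_of_mem f (mem_univ i)))]
  simp

lemma sum_freq' (f g : Fin N → W) :
    ∑ w ∈ voc f g, (Finset.univ.filter fun i => g i = w).card = N := by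
  rw [← Finset.card_eq_sum_card_fiberwise
    (f := g) (t := voc f g)
    (fun i _ => mem_union_right _ (mem_image_of_mem g (mem_univ i)))]
  simp

end D2Aux

open Finset in
/-- For all texts `A`, `B` of equal length `N ≥ 1`, `d_2(A, B, 0) = d_labbe(A, B)`. -/
theorem d2_zero_eq_dlabbe {W : Type*} [DecidableEq W]
    (A B : ℕ → W) (N : ℕ) (hN : 1 ≤ N) :
    d2 A B N 0 = dlabbe A B N := by
  classical
  set f : Fin N → W := fun i => A ((i : ℕ) + 1) with hf
  set g : Fin N → W := fun i => B ((i : ℕ) + 1) with hg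
  -- dphrase at lambda = 0 is an indicator
  have hdp : ∀ i j : Fin N, dphrase A B N N 0 ((i : ℕ) + 1) ((j : ℕ) + 1)
      = if f i = g j then (0:ℝ) else 1 := by
    intro i j
    rw [dphrase, tsum_eq_single 0 (fun k hk => by simp [zero_pow hk])]
    have hi : (i : ℕ) + 1 ≤ N := i.isLt
    have hj : (j : ℕ) + 1 ≤ N := j.isLt
    simp only [pow_zero, one_mul, add_zero, delta, hi, hj, true_and]
    rfl
  -- the permutation sums
  have hSval : ∀ φ : Equiv.Perm (Fin N),
      ∑ i : Fin N, dphrase A B N N 0 ((i : ℕ) + 1) ((φ i : ℕ) + 1)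
        = (N : ℝ) - ((D2Aux.mset f g φ).card : ℝ) := by
    intro φ
    have h1 : ∀ i : Fin N, dphrase A B N N 0 ((i : ℕ) + 1) ((φ i : ℕ) + 1)
        = if ¬ (f i = g (φ i)) then (1:ℝ) else 0 := by
      intro i; rw [hdp i (φ i)]; split_ifs with h <;> tauto
    rw [Finset.sum_congr rfl fun i _ => h1 i, Finset.sum_boole]
    have hcard : (D2Aux.mset f g φ).card
        + (Finset.univ.filter fun i => ¬ f i = g (φ i)).card = N := by
      have := Finset.card_filter_add_card_filter_not
        (s := (Finset.univ : Finset (Fin N))) (p := fun i => f i = g (φ i))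
      simpa [D2Aux.mset, Finset.card_univ] using this
    have := congrArg (Nat.cast : ℕ → ℝ) hcard
    push_cast at this
    linarith
  set M : ℕ := ∑ w ∈ D2Aux.voc f g, D2Aux.mm f g w with hM
  -- value of the infimum
  have hlb : ∀ φ : Equiv.Perm (Fin N),
      (N : ℝ) - (M : ℝ) ≤ ∑ i : Fin N, dphrase A B N N 0 ((i : ℕ) + 1) ((φ i : ℕ) + 1) := by
    intro φ
    rw [hSval φ]
    have := D2Aux.matches_le f g φ
    have : ((D2Aux.mset f g φ).card : ℝ) ≤ (M : ℝ) := by exact_mod_cast this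
    linarith
  obtain ⟨φ₀, hφ₀⟩ := D2Aux.exists_good f g
  have hφ₀' : (D2Aux.mset f g φ₀).card = M :=
    le_antisymm (D2Aux.matches_le f g φ₀) hφ₀
  have hinf : ⨅ φ : Equiv.Perm (Fin N),
      ∑ i : Fin N, dphrase A B N N 0 ((i : ℕ) + 1) ((φ i : ℕ) + 1)
      = (N : ℝ) - (M : ℝ) := by
    refine le_antisymm ?_ (le_ciInf hlb)
    refine ciInf_le_of_le ⟨(N : ℝ) - (M : ℝ), ?_⟩ φ₀ ?_
    · rintro x ⟨φ, rfl⟩; exact hlb φ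
    · rw [hSval φ₀, hφ₀']
  -- frequencies
  have hfilt : ∀ (C : ℕ → W) (w : W),
      (Finset.Icc 1 N).filter (fun n => C n = w)
        = ((Finset.univ.filter fun i : Fin N => C ((i : ℕ) + 1) = w).image
            (fun i : Fin N => (i : ℕ) + 1)) := by
    intro C w
    ext n
    simp only [Finset.mem_filter, Finset.mem_Icc, Finset.mem_image, Finset.mem_univ, true_and]
    constructor
    · rintro ⟨⟨h1, h2⟩, hc⟩
      refine ⟨⟨n - 1, by omega⟩, ?_, show n - 1 + 1 = n by omega⟩
      simpa [Nat.sub_add_cancel h1] using hc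
    · rintro ⟨i, hc, rfl⟩
      have := i.isLt
      exact ⟨⟨by omega, by omega⟩, hc⟩
  have hinj : Function.Injective (fun i : Fin N => (i : ℕ) + 1) := by
    intro a b h
    simp only [] at h
    exact Fin.ext (by omega)
  have hfreqA : ∀ w, freq A N w = (Finset.univ.filter fun i : Fin N => f i = w).card := by
    intro w
    rw [freq, hfilt A w, Finset.card_image_of_injective _ hinj]
  have hfreqB : ∀ w, freq B N w = (Finset.univ.filter fun i : Fin N => g i = w).card := by
    intro w
    rw [freq, hfilt B w, Finset.card_image_of_injective _ hinj]
  -- vocabularies agree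
  have hvoc : (Finset.Icc 1 N).image A ∪ (Finset.Icc 1 N).image B = D2Aux.voc f g := by
    have himg : ∀ (C : ℕ → W), (Finset.Icc 1 N).image C
        = Finset.univ.image (fun i : Fin N => C ((i : ℕ) + 1)) := by
      intro C
      ext w
      simp only [Finset.mem_image, Finset.mem_Icc, Finset.mem_univ, true_and]
      constructor
      · rintro ⟨n, ⟨h1, h2⟩, rfl⟩
        exact ⟨⟨n - 1, by omega⟩, by simp [Nat.sub_add_cancel h1]⟩
      · rintro ⟨i, rfl⟩
        have := i.isLt
        exact ⟨(i : ℕ) + 1, ⟨by omega, by omega⟩, rfl⟩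
    rw [D2Aux.voc, himg A, himg B, hf, hg]
  -- the word sum
  have habs : ∀ p q : ℕ, |(p:ℝ) - (q:ℝ)| = (p:ℝ) + (q:ℝ) - 2 * ((min p q : ℕ) : ℝ) := by
    intro p q
    rcases le_total p q with h | h
    · rw [min_eq_left h, abs_of_nonpos (by simp [Nat.cast_le.2 h])]
      ring
    · rw [min_eq_right h, abs_of_nonneg (by simp [Nat.cast_le.2 h])]
      ring
  have hsum : ∑ w ∈ D2Aux.voc f g, |(freq A N w : ℝ) - (freq B N w : ℝ)|
      = 2 * (N : ℝ) - 2 * (M : ℝ) := by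
    have h1 : ∀ w ∈ D2Aux.voc f g, |(freq A N w : ℝ) - (freq B N w : ℝ)|
        = ((Finset.univ.filter fun i : Fin N => f i = w).card : ℝ)
          + ((Finset.univ.filter fun i : Fin N => g i = w).card : ℝ)
          - 2 * ((D2Aux.mm f g w : ℕ) : ℝ) := by
      intro w _
      rw [hfreqA w, hfreqB w, habs]
      rfl
    rw [Finset.sum_congr rfl h1, Finset.sum_sub_distrib, Finset.sum_add_distrib,
      ← Nat.cast_sum, ← Nat.cast_sum, D2Aux.sum_freq f g, D2Aux.sum_freq' f g,
      ← Finset.mul_sum, ← Nat.cast_sum, ← hM]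
    ring
  -- finish
  have hNpos : (0:ℝ) < N := by exact_mod_cast hN
  rw [d2, hinf, dlabbe, hvoc, hsum]
  field_simp
  ring
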